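/- For any continuous f and Lipschitz g, h on the Cantor dust CD, the sequence φ_n(f,g,h) = Σ_{𝐬 ∈ Sⁿ} Tr(ρ_𝐬(f)[F, ρ_𝐬(g)][F, ρ_𝐬(h)]M) converges to 0 as n → ∞. -/

import Mathlib

open Matrix

noncomputable def Fop : Matrix (Fin 4) (Fin 4) ℂ :=
  ((Real.sqrt 2 : ℝ) : ℂ)⁻¹ • !![0,0,1,1; 0,0,-1,1; 1,-1,0,0; 1,1,0,0]

/-- Multiplication operator: diagonal of vertex values, ordered v₀, v₂, v₁, v₃. -/
def rho (f : Fin 4 → ℂ) : Matrix (Fin 4) (Fin 4) ℂ :=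
  !![f 0, 0, 0, 0; 0, f 2, 0, 0; 0, 0, f 1, 0; 0, 0, 0, f 3]

def Mmat : Matrix (Fin 4) (Fin 4) ℂ :=
  !![0,1,0,0; -1,0,0,0; 0,0,0,1; 0,0,-1,0]

/-- The four similitudes of the Cantor-dust IFS. -/
noncomputable def ifsMap : Fin 4 → ℝ × ℝ → ℝ × ℝ
  | 0 => fun p => (p.1 / 3, p.2 / 3)
  | 1 => fun p => (p.1 / 3, p.2 / 3 + 2/3)
  | 2 => fun p => (p.1 / 3 + 2/3, p.2 / 3)
  | 3 => fun p => (p.1 / 3 + 2/3, p.2 / 3 + 2/3)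

/-- `f_𝐬 = f_{s₁} ∘ ⋯ ∘ f_{sₙ}`. -/
noncomputable def ifsComp {n : ℕ} (s : Fin n → Fin 4) : ℝ × ℝ → ℝ × ℝ :=
  (List.ofFn s).foldr (fun i g => ifsMap i ∘ g) id

/-- The corners of the unit square, numbered counterclockwise from the origin. -/
noncomputable def corner : Fin 4 → ℝ × ℝ := ![(0, 0), (1, 0), (1, 1), (0, 1)]

/-- The `i`-th vertex of the level-`n` square indexed by `s`. -/
noncomputable def vert {n : ℕ} (s : Fin n → Fin 4) (i : Fin 4) : ℝ × ℝ :=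
  ifsComp s (corner i)

/-- The approximating combinatorial integration. -/
noncomputable def phi (n : ℕ) (f g h : ℝ × ℝ → ℂ) : ℂ :=
  ∑ s : Fin n → Fin 4,
    (rho (f ∘ vert s) *
      (Fop * rho (g ∘ vert s) - rho (g ∘ vert s) * Fop) *
      (Fop * rho (h ∘ vert s) - rho (h ∘ vert s) * Fop) * Mmat).trace

lemma aux_abs (a b : ℝ) : |a/3 - b/3| = |a - b| / 3 := by
  rw [div_sub_div_same, abs_div]; norm_num

lemma ifsMap_dist (i : Fin 4) (x y : ℝ × ℝ) :
    dist (ifsMap i x) (ifsMap i y) = dist x y / 3 := by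
  have h3 : (0:ℝ) ≤ 3 := by norm_num
  fin_cases i <;>
    simp only [ifsMap, Prod.dist_eq, Real.dist_eq, add_sub_add_right_eq_sub, aux_abs,
      max_div_div_right h3]


section geom
variable (CD : Set (ℝ × ℝ)) (hCDcomp : IsCompact CD)
  (hCDinv : CD = ⋃ i : Fin 4, ifsMap i '' CD)

include hCDinv in
lemma maps_into (i : Fin 4) {x : ℝ × ℝ} (hx : x ∈ CD) : ifsMap i x ∈ CD := by
  rw [hCDinv]
  exact Set.mem_iUnion.2 ⟨i, Set.mem_image_of_mem _ hx⟩

include hCDinv in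
lemma foldr_mem (l : List (Fin 4)) {x : ℝ × ℝ} (hx : x ∈ CD) :
    (l.foldr (fun i g => ifsMap i ∘ g) id) x ∈ CD := by
  induction l with
  | nil => simpa using hx
  | cons a t ih => exact maps_into CD hCDinv a ih

lemma foldr_dist (l : List (Fin 4)) (x y : ℝ × ℝ) :
    dist ((l.foldr (fun i g => ifsMap i ∘ g) id) x)
      ((l.foldr (fun i g => ifsMap i ∘ g) id) y) = dist x y / 3 ^ l.length := by
  induction l with
  | nil => simp
  | cons a t ih =>
      simp only [List.foldr_cons, Function.comp_apply, ifsMap_dist, ih, List.length_cons,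
        pow_succ, div_div]

include hCDcomp hCDinv in
lemma corner_mem (hne : CD.Nonempty) (i : Fin 4) : corner i ∈ CD := by
  obtain ⟨x, hx⟩ := hne
  -- choose the map whose fixed point is corner i
  have key : ∀ m : Fin 4, ∀ p : ℝ × ℝ, ifsMap m p = p →
      p ∈ CD := by
    intro m p hp
    have hmem : ∀ k : ℕ, (ifsMap m)^[k] x ∈ CD := by
      intro k
      induction k with
      | zero => simpa using hx
      | succ k ih => rw [Function.iterate_succ_apply']; exact maps_into CD hCDinv m ih
    have hdist : ∀ k : ℕ, dist ((ifsMap m)^[k] x) p = dist x p / 3 ^ k := by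
      intro k
      induction k with
      | zero => simp
      | succ k ih =>
          rw [Function.iterate_succ_apply']
          calc dist (ifsMap m ((ifsMap m)^[k] x)) p
              = dist (ifsMap m ((ifsMap m)^[k] x)) (ifsMap m p) := by rw [hp]
            _ = dist ((ifsMap m)^[k] x) p / 3 := ifsMap_dist m _ _
            _ = dist x p / 3 ^ (k+1) := by rw [ih, pow_succ, div_div]
    have htend : Filter.Tendsto (fun k => (ifsMap m)^[k] x) Filter.atTop (nhds p) := by
      rw [tendsto_iff_dist_tendsto_zero]
      simp only [hdist, div_eq_mul_inv, ← inv_pow]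
      simpa using (tendsto_pow_atTop_nhds_zero_of_lt_one (by norm_num : (0:ℝ) ≤ 3⁻¹)
        (by norm_num)).const_mul (dist x p)
    exact hCDcomp.isClosed.mem_of_tendsto htend (Filter.Eventually.of_forall hmem)
  fin_cases i
  · exact key 0 _ (by simp [ifsMap, corner])
  · exact key 2 _ (by simp [ifsMap, corner]; norm_num)
  · exact key 3 _ (by simp [ifsMap, corner]; norm_num)
  · exact key 1 _ (by simp [ifsMap, corner]; norm_num)

include hCDcomp hCDinv in
lemma vert_mem (hne : CD.Nonempty) {n : ℕ} (s : Fin n → Fin 4) (i : Fin 4) :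
    vert s i ∈ CD :=
  foldr_mem CD hCDinv _ (corner_mem CD hCDcomp hCDinv hne i)

lemma vert_dist {n : ℕ} (s : Fin n → Fin 4) (i j : Fin 4) :
    dist (vert s i) (vert s j) ≤ 1 / 3 ^ n := by
  have h := foldr_dist (List.ofFn s) (corner i) (corner j)
  rw [List.length_ofFn] at h
  rw [vert, vert, ifsComp, h]
  have hc : dist (corner i) (corner j) ≤ 1 := by
    fin_cases i <;> fin_cases j <;>
      simp [corner, Prod.dist_eq, Real.dist_eq, Prod.norm_def] <;> norm_num
  have h3 : (0:ℝ) ≤ 3 ^ n := by positivity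
  exact div_le_div_of_nonneg_right hc (by positivity)

end geom


def dvec (a : Fin 4 → ℂ) : Fin 4 → ℂ := ![a 0, a 2, a 1, a 3]

lemma rho_eq (a : Fin 4 → ℂ) : rho a = Matrix.diagonal (dvec a) := by
  ext i j
  fin_cases i <;> fin_cases j <;>
    simp [rho, dvec, Matrix.diagonal, Matrix.vecHead, Matrix.vecTail]

lemma Fop_entry_norm (i j : Fin 4) : ‖Fop i j‖ ≤ 1 := by
  have h2 : (1:ℝ) ≤ Real.sqrt 2 := by
    nlinarith [Real.sq_sqrt (by norm_num : (0:ℝ) ≤ 2), Real.sqrt_nonneg 2]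
  have hn : ‖(((Real.sqrt 2 : ℝ) : ℂ))⁻¹‖ ≤ 1 := by
    rw [norm_inv, Complex.norm_real, Real.norm_eq_abs, abs_of_nonneg (Real.sqrt_nonneg 2)]
    exact inv_le_one_of_one_le₀ h2
  fin_cases i <;> fin_cases j <;>
    simp [Fop, Matrix.vecHead, Matrix.vecTail, norm_mul] <;>
    simpa using hn

lemma Mmat_entry_norm (i j : Fin 4) : ‖Mmat i j‖ ≤ 1 := by
  fin_cases i <;> fin_cases j <;> simp [Mmat, Matrix.vecHead, Matrix.vecTail]

lemma comm_apply (v : Fin 4 → ℂ) (i j : Fin 4) :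
    (Fop * Matrix.diagonal v - Matrix.diagonal v * Fop) i j = Fop i j * (v j - v i) := by
  simp only [Matrix.sub_apply, Matrix.mul_diagonal, Matrix.diagonal_mul]
  ring

lemma tr4 (u : Fin 4 → ℂ) (X Y : Matrix (Fin 4) (Fin 4) ℂ) :
    (Matrix.diagonal u * X * Y * Mmat).trace
    = ∑ i : Fin 4, ∑ j : Fin 4, ∑ k : Fin 4, u i * X i j * Y j k * Mmat k i := by
  rw [Matrix.trace]
  simp only [Matrix.diag_apply, Matrix.mul_apply, Matrix.diagonal_mul, Finset.sum_mul]
  refine Finset.sum_congr rfl fun i _ => ?_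
  rw [Finset.sum_comm]
  refine Finset.sum_congr rfl fun j _ => Finset.sum_congr rfl fun k _ => ?_
  rw [Finset.sum_eq_single i]
  · simp
  · intro b _ hb
    simp [Matrix.diagonal_apply_ne' _ hb]
  · simp

lemma trace_expand (u v w : Fin 4 → ℂ) :
    (Matrix.diagonal u * (Fop * Matrix.diagonal v - Matrix.diagonal v * Fop) *
      (Fop * Matrix.diagonal w - Matrix.diagonal w * Fop) * Mmat).trace
    = ∑ i : Fin 4, ∑ j : Fin 4, ∑ k : Fin 4,
        u i * (Fop i j * (v j - v i)) * (Fop j k * (w k - w j)) * Mmat k i := by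
  rw [tr4]
  simp only [comm_apply]

lemma trace_bound (u v w : Fin 4 → ℂ) (A B C : ℝ)
    (hB : 0 ≤ B) (hC : 0 ≤ C)
    (hu : ∀ i, ‖u i‖ ≤ A) (hv : ∀ i j, ‖v i - v j‖ ≤ B) (hw : ∀ i j, ‖w i - w j‖ ≤ C) :
    ‖(Matrix.diagonal u * (Fop * Matrix.diagonal v - Matrix.diagonal v * Fop) *
      (Fop * Matrix.diagonal w - Matrix.diagonal w * Fop) * Mmat).trace‖
    ≤ 64 * (A * B * C) := by
  have hA : 0 ≤ A := le_trans (norm_nonneg _) (hu 0)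
  rw [trace_expand]
  have key : ∀ i j k : Fin 4,
      ‖u i * (Fop i j * (v j - v i)) * (Fop j k * (w k - w j)) * Mmat k i‖ ≤ A * B * C := by
    intro i j k
    calc ‖u i * (Fop i j * (v j - v i)) * (Fop j k * (w k - w j)) * Mmat k i‖
        = ‖u i‖ * (‖Fop i j‖ * ‖v j - v i‖) * (‖Fop j k‖ * ‖w k - w j‖) * ‖Mmat k i‖ := by
          simp [norm_mul]
      _ ≤ A * (1 * B) * (1 * C) * 1 := by
          gcongr
          · exact hu i
          · exact Fop_entry_norm i j
          · exact hv j i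
          · exact Fop_entry_norm j k
          · exact hw k j
          · exact Mmat_entry_norm k i
      _ = A * B * C := by ring
  calc ‖∑ i : Fin 4, ∑ j : Fin 4, ∑ k : Fin 4,
        u i * (Fop i j * (v j - v i)) * (Fop j k * (w k - w j)) * Mmat k i‖
      ≤ ∑ i : Fin 4, ∑ j : Fin 4, ∑ k : Fin 4, (A * B * C) := by
        refine (norm_sum_le _ _).trans (Finset.sum_le_sum fun i _ => ?_)
        refine (norm_sum_le _ _).trans (Finset.sum_le_sum fun j _ => ?_)
        exact (norm_sum_le _ _).trans (Finset.sum_le_sum fun k _ => key i j k)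
    _ = 64 * (A * B * C) := by simp; ring


theorem stmt14 (CD : Set (ℝ × ℝ)) (hCDne : CD.Nonempty) (hCDcomp : IsCompact CD)
    (hCDinv : CD = ⋃ i : Fin 4, ifsMap i '' CD)
    (f g h : ℝ × ℝ → ℂ) (hf : ContinuousOn f CD)
    (hg : ∃ K : NNReal, LipschitzOnWith K g CD)
    (hh : ∃ K : NNReal, LipschitzOnWith K h CD) :
    Filter.Tendsto (fun n => phi n f g h) Filter.atTop (nhds 0) := by
  obtain ⟨Kg, hg⟩ := hg
  obtain ⟨Kh, hh⟩ := hh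
  obtain ⟨Cf, hCf⟩ := hCDcomp.exists_bound_of_continuousOn hf
  have hvmem : ∀ {n : ℕ} (s : Fin n → Fin 4) (i : Fin 4), vert s i ∈ CD :=
    fun s i => vert_mem CD hCDcomp hCDinv hCDne s i
  -- bound each summand
  have hsummand : ∀ (n : ℕ) (s : Fin n → Fin 4),
      ‖(rho (f ∘ vert s) *
        (Fop * rho (g ∘ vert s) - rho (g ∘ vert s) * Fop) *
        (Fop * rho (h ∘ vert s) - rho (h ∘ vert s) * Fop) * Mmat).trace‖
      ≤ 64 * (Cf * ((Kg : ℝ) * (1 / 3 ^ n)) * ((Kh : ℝ) * (1 / 3 ^ n))) := by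
    intro n s
    have h3 : (0:ℝ) ≤ 1 / 3 ^ n := by positivity
    have hgd : ∀ a b : Fin 4, ‖g (vert s a) - g (vert s b)‖ ≤ (Kg : ℝ) * (1 / 3 ^ n) := by
      intro a b
      rw [← dist_eq_norm]
      calc dist (g (vert s a)) (g (vert s b)) ≤ (Kg:ℝ) * dist (vert s a) (vert s b) :=
            hg.dist_le_mul _ (hvmem s a) _ (hvmem s b)
        _ ≤ (Kg:ℝ) * (1 / 3 ^ n) := by
            exact mul_le_mul_of_nonneg_left (vert_dist s a b) (Kg.coe_nonneg)
    have hhd : ∀ a b : Fin 4, ‖h (vert s a) - h (vert s b)‖ ≤ (Kh : ℝ) * (1 / 3 ^ n) := by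
      intro a b
      rw [← dist_eq_norm]
      calc dist (h (vert s a)) (h (vert s b)) ≤ (Kh:ℝ) * dist (vert s a) (vert s b) :=
            hh.dist_le_mul _ (hvmem s a) _ (hvmem s b)
        _ ≤ (Kh:ℝ) * (1 / 3 ^ n) := by
            exact mul_le_mul_of_nonneg_left (vert_dist s a b) (Kh.coe_nonneg)
    rw [rho_eq, rho_eq, rho_eq]
    refine trace_bound _ _ _ _ _ _ (by positivity) (by positivity) ?_ ?_ ?_
    · intro i
      fin_cases i <;> simpa [dvec] using hCf _ (hvmem s _)
    · intro i j
      fin_cases i <;> fin_cases j <;> simpa [dvec] using hgd _ _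
    · intro i j
      fin_cases i <;> fin_cases j <;> simpa [dvec] using hhd _ _
  have hCf0 : 0 ≤ Cf := le_trans (norm_nonneg _) (hCf _ (corner_mem CD hCDcomp hCDinv hCDne 0))
  have hbound : ∀ n : ℕ, ‖phi n f g h‖ ≤ (64 * Cf * (Kg:ℝ) * (Kh:ℝ)) * (4/9 : ℝ) ^ n := by
    intro n
    calc ‖phi n f g h‖
        ≤ ∑ _s : Fin n → Fin 4,
            64 * (Cf * ((Kg : ℝ) * (1 / 3 ^ n)) * ((Kh : ℝ) * (1 / 3 ^ n))) :=
          (norm_sum_le _ _).trans (Finset.sum_le_sum fun s _ => hsummand n s)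
      _ = (4:ℝ) ^ n * (64 * (Cf * ((Kg : ℝ) * (1 / 3 ^ n)) * ((Kh : ℝ) * (1 / 3 ^ n)))) := by
          rw [Finset.sum_const, Finset.card_univ, nsmul_eq_mul]
          norm_num [Fintype.card_fun]
      _ = (64 * Cf * (Kg:ℝ) * (Kh:ℝ)) * (4/9 : ℝ) ^ n := by
          rw [div_pow, show ((9:ℝ) ^ n) = 3 ^ n * 3 ^ n by rw [← mul_pow]; norm_num]
          field_simp
  refine squeeze_zero_norm hbound ?_
  simpa using (tendsto_pow_atTop_nhds_zero_of_lt_one (by norm_num : (0:ℝ) ≤ 4/9)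
    (by norm_num)).const_mul (64 * Cf * (Kg:ℝ) * (Kh:ℝ))
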